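/- arXiv:2604.21865 — 4 statements merged into one kernel-verified Lean document; each statement's English description precedes it below -/
import Mathlib

section
/- Under the hierarchical model X | θ, σ² ~ N(θ, σ²), S² | σ² ~ σ²χ²_k/k, with prior (θ, σ²) ~ g and joint marginal density f(x, s²) = ∬ p(x, s² | θ, σ²) g(θ, σ²) dθ dσ², the posterior moment generating function of U = θ/σ² given (X, S²) = (x, s²) satisfies, for all t in a neighborhood of 0 with s² − (2tx + t²)/k > 0: E[exp(tθ/σ²) | x, s²] = (s² / (s² − (2tx + t²)/k))^{k/2−1} · f(x + t, s² − (2tx + t²)/k) / f(x, s²). -/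
open Real MeasureTheory

/-- The normalizing constant `C_k = k^{k/2} / (√(2π) Γ(k/2) 2^{k/2})`. -/
noncomputable def Ck (k : ℝ) : ℝ :=
  k ^ (k / 2) / (Real.sqrt (2 * Real.pi) * Real.Gamma (k / 2) * 2 ^ (k / 2))

/-- The joint likelihood `p(x, s² | θ, σ²)` of the heteroscedastic normal means model. -/
noncomputable def lik (k x s2 θ σ2 : ℝ) : ℝ :=
  Ck k * s2 ^ (k / 2 - 1) * σ2 ^ (-((k + 1) / 2)) *
    Real.exp (-(((x - θ) ^ 2 + k * s2) / (2 * σ2)))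

/-- `∫∫ h(θ, σ²) p(x, s² | θ, σ²) g(θ, σ²) dθ dσ²`, integrating `σ²` over `(0, ∞)`. -/
noncomputable def postInt (k : ℝ) (g : ℝ → ℝ → ℝ) (x s2 : ℝ) (h : ℝ → ℝ → ℝ) : ℝ :=
  ∫ θ : ℝ, ∫ σ2 in Set.Ioi (0 : ℝ), h θ σ2 * lik k x s2 θ σ2 * g θ σ2

/-- The joint marginal density `f(x, s²) = ∬ p(x, s² | θ, σ²) g(θ, σ²) dθ dσ²`. -/
noncomputable def marg (k : ℝ) (g : ℝ → ℝ → ℝ) (x s2 : ℝ) : ℝ :=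
  postInt k g x s2 (fun _ _ => 1)

/-- The posterior expectation `E[h(θ, σ²) | x, s²]` under the posterior density
`p(x, s² | θ, σ²) g(θ, σ²) / f(x, s²)`. -/
noncomputable def postExp (k : ℝ) (g : ℝ → ℝ → ℝ) (x s2 : ℝ) (h : ℝ → ℝ → ℝ) : ℝ :=
  postInt k g x s2 h / marg k g x s2

/-- the posterior MGF of `U = θ/σ²` given `(x, s²)` satisfies, for all `t`
in a neighborhood of `0` with `s² − (2tx + t²)/k > 0`,
`E[exp(tθ/σ²) | x, s²] = (s²/(s² − (2tx+t²)/k))^{k/2−1} f(x+t, s² − (2tx+t²)/k)/f(x, s²)`. -/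
theorem posterior_mgf_U (k : ℝ) (hk : 0 < k) (g : ℝ → ℝ → ℝ)
    (hg : ∀ θ σ2, 0 ≤ g θ σ2)
    (hgint : ∫ θ : ℝ, ∫ σ2 in Set.Ioi (0 : ℝ), g θ σ2 = 1)
    (x s2 : ℝ) (hs2 : 0 < s2) (hf : 0 < marg k g x s2)
    (hint : ∀ t : ℝ, Integrable
      (fun p : ℝ × ℝ => Real.exp (t * p.1 / p.2) * lik k x s2 p.1 p.2 * g p.1 p.2)
      ((volume : Measure ℝ).prod (volume.restrict (Set.Ioi 0)))) :
    ∀ t : ℝ, 0 < s2 - (2 * t * x + t ^ 2) / k →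
      postExp k g x s2 (fun θ σ2 => Real.exp (t * θ / σ2)) =
        (s2 / (s2 - (2 * t * x + t ^ 2) / k)) ^ (k / 2 - 1) *
          marg k g (x + t) (s2 - (2 * t * x + t ^ 2) / k) / marg k g x s2 := by
  intro t hs2'
  set s2' := s2 - (2 * t * x + t ^ 2) / k with hs2'def
  have key : ∀ θ σ2 : ℝ, σ2 ∈ Set.Ioi (0 : ℝ) →
      Real.exp (t * θ / σ2) * lik k x s2 θ σ2 =
      (s2 / s2') ^ (k / 2 - 1) * lik k (x + t) s2' θ σ2 := by
    intro θ σ2 hσ2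
    have hσ2' : (0 : ℝ) < σ2 := hσ2
    unfold lik
    have hpow : s2 ^ (k / 2 - 1) = (s2 / s2') ^ (k / 2 - 1) * s2' ^ (k / 2 - 1) := by
      rw [← Real.mul_rpow (by positivity) hs2'.le, div_mul_cancel₀ _ (ne_of_gt hs2')]
    have hexp : Real.exp (-(((x + t - θ) ^ 2 + k * s2') / (2 * σ2))) =
        Real.exp (t * θ / σ2) * Real.exp (-(((x - θ) ^ 2 + k * s2) / (2 * σ2))) := by
      rw [← Real.exp_add]
      congr 1
      have hk' : k ≠ 0 := ne_of_gt hk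
      have hσ2'' : σ2 ≠ 0 := ne_of_gt hσ2'
      rw [hs2'def]
      field_simp
      ring
    rw [hpow, hexp]
    ring
  have h1 : postInt k g x s2 (fun θ σ2 => Real.exp (t * θ / σ2))
      = (s2 / s2') ^ (k / 2 - 1) * marg k g (x + t) s2' := by
    unfold marg postInt
    rw [← integral_const_mul]
    congr 1
    funext θ
    rw [← integral_const_mul]
    apply setIntegral_congr_fun measurableSet_Ioi
    intro σ2 hσ2
    simp only
    rw [key θ σ2 hσ2]
    ring
  unfold postExp
  rw [h1, mul_div_assoc]
end

section
/- Under the hierarchical model X | θ, σ² ~ N(θ, σ²), S² | σ² ~ σ²χ²_k/k, with prior (θ, σ²) ~ g and joint marginal density f(x, s²), the posterior moment generating function of V = 1/σ² given (x, s²) satisfies, for all t in a neighborhood of 0 with s² − 2t/k > 0: E[exp(t/σ²) | x, s²] = (s² / (s² − 2t/k))^{k/2−1} · f(x, s² − 2t/k) / f(x, s²). -/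
open Real MeasureTheory

/-- the posterior MGF of `V = 1/σ²` given `(x, s²)` satisfies, for all `t`
in a neighborhood of `0` with `s² − 2t/k > 0`,
`E[exp(t/σ²) | x, s²] = (s²/(s² − 2t/k))^{k/2−1} f(x, s² − 2t/k)/f(x, s²)`. -/
theorem posterior_mgf_V (k : ℝ) (hk : 0 < k) (g : ℝ → ℝ → ℝ)
    (hg : ∀ θ σ2, 0 ≤ g θ σ2)
    (hgint : ∫ θ : ℝ, ∫ σ2 in Set.Ioi (0 : ℝ), g θ σ2 = 1)
    (x s2 : ℝ) (hs2 : 0 < s2) (hf : 0 < marg k g x s2)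
    (hint : ∀ t : ℝ, Integrable
      (fun p : ℝ × ℝ => Real.exp (t / p.2) * lik k x s2 p.1 p.2 * g p.1 p.2)
      ((volume : Measure ℝ).prod (volume.restrict (Set.Ioi 0)))) :
    ∀ t : ℝ, 0 < s2 - 2 * t / k →
      postExp k g x s2 (fun _ σ2 => Real.exp (t / σ2)) =
        (s2 / (s2 - 2 * t / k)) ^ (k / 2 - 1) *
          marg k g x (s2 - 2 * t / k) / marg k g x s2 := by
  intro t ht
  set s2' := s2 - 2 * t / k with hs2'
  have hc : (0:ℝ) < s2 / s2' := div_pos hs2 ht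
  have key : ∀ θ : ℝ, ∀ σ2 ∈ Set.Ioi (0:ℝ),
      Real.exp (t / σ2) * lik k x s2 θ σ2 * g θ σ2 =
      (s2 / s2') ^ (k / 2 - 1) * ((1:ℝ) * lik k x s2' θ σ2 * g θ σ2) := by
    intro θ σ2 hσ
    have hσ0 : (0:ℝ) < σ2 := hσ
    have hpow : (s2 / s2') ^ (k/2-1) * s2' ^ (k/2-1) = s2 ^ (k/2-1) := by
      rw [← Real.mul_rpow hc.le ht.le, div_mul_cancel₀ _ (ne_of_gt ht)]
    have hexp : Real.exp (t/σ2) * Real.exp (-(((x-θ)^2 + k*s2)/(2*σ2))) =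
        Real.exp (-(((x-θ)^2 + k*s2')/(2*σ2))) := by
      rw [← Real.exp_add]
      congr 1
      rw [hs2']
      field_simp
      ring
    unfold lik
    rw [← hpow, ← hexp]
    ring
  have hInner : ∀ θ : ℝ,
      (∫ σ2 in Set.Ioi (0:ℝ), Real.exp (t/σ2) * lik k x s2 θ σ2 * g θ σ2)
      = (s2/s2') ^ (k/2-1) * ∫ σ2 in Set.Ioi (0:ℝ), (1:ℝ) * lik k x s2' θ σ2 * g θ σ2 := by
    intro θ
    rw [← MeasureTheory.integral_const_mul]
    exact MeasureTheory.setIntegral_congr_fun measurableSet_Ioi (key θ)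
  unfold postExp postInt marg postInt
  have hA : (∫ θ : ℝ, ∫ σ2 in Set.Ioi (0:ℝ), Real.exp (t/σ2) * lik k x s2 θ σ2 * g θ σ2)
      = (s2/s2') ^ (k/2-1) *
        ∫ θ : ℝ, ∫ σ2 in Set.Ioi (0:ℝ), (1:ℝ) * lik k x s2' θ σ2 * g θ σ2 := by
    simp_rw [hInner]
    exact MeasureTheory.integral_const_mul _ _
  rw [hA]
end

section
/- Under the hierarchical model with likelihood p(x, s² | θ, σ²) = C_k (s²)^{k/2−1} (σ²)^{−(k+1)/2} exp(−((x−θ)² + k s²)/(2σ²)) and arbitrary prior g, the joint posterior MGF of (U, V) = (θ/σ², 1/σ²) given (x, s²) satisfies, for all (t₁, t₂) near (0,0) with s² − (2t₁x + t₁² + 2t₂)/k > 0: E[exp(t₁θ/σ² + t₂/σ²) | x, s²] = (s²/(s² − (2t₁x + t₁² + 2t₂)/k))^{k/2−1} · f(x + t₁, s² − (2t₁x + t₁² + 2t₂)/k) / f(x, s²). -/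
open Real MeasureTheory

/-- the joint posterior MGF of `(U, V) = (θ/σ², 1/σ²)` given `(x, s²)`
satisfies, for all `(t₁, t₂)` near `(0,0)` with `s² − (2t₁x + t₁² + 2t₂)/k > 0`,
`E[exp(t₁θ/σ² + t₂/σ²) | x, s²]
  = (s²/(s² − (2t₁x+t₁²+2t₂)/k))^{k/2−1} f(x+t₁, s² − (2t₁x+t₁²+2t₂)/k)/f(x, s²)`. -/
theorem posterior_mgf_UV (k : ℝ) (hk : 0 < k) (g : ℝ → ℝ → ℝ)
    (hg : ∀ θ σ2, 0 ≤ g θ σ2)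
    (hgint : ∫ θ : ℝ, ∫ σ2 in Set.Ioi (0 : ℝ), g θ σ2 = 1)
    (x s2 : ℝ) (hs2 : 0 < s2) (hf : 0 < marg k g x s2)
    (hint : ∀ t1 t2 : ℝ, Integrable
      (fun p : ℝ × ℝ => Real.exp (t1 * p.1 / p.2 + t2 / p.2) * lik k x s2 p.1 p.2 * g p.1 p.2)
      ((volume : Measure ℝ).prod (volume.restrict (Set.Ioi 0)))) :
    ∀ t1 t2 : ℝ, 0 < s2 - (2 * t1 * x + t1 ^ 2 + 2 * t2) / k →
      postExp k g x s2 (fun θ σ2 => Real.exp (t1 * θ / σ2 + t2 / σ2)) =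
        (s2 / (s2 - (2 * t1 * x + t1 ^ 2 + 2 * t2) / k)) ^ (k / 2 - 1) *
          marg k g (x + t1) (s2 - (2 * t1 * x + t1 ^ 2 + 2 * t2) / k) / marg k g x s2 := by
  intro t1 t2 hpos
  set s2' := s2 - (2 * t1 * x + t1 ^ 2 + 2 * t2) / k with hs2'def
  have hs2'pos : (0:ℝ) < s2' := hpos
  set c := (s2 / s2') ^ (k / 2 - 1) with hc
  have hcs : s2 ^ (k / 2 - 1) = c * s2' ^ (k / 2 - 1) := by
    rw [hc, Real.div_rpow hs2.le hs2'pos.le,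
      div_mul_cancel₀ _ (Real.rpow_pos_of_pos hs2'pos _).ne']
  have key : postInt k g x s2 (fun θ σ2 => Real.exp (t1 * θ / σ2 + t2 / σ2))
      = c * marg k g (x + t1) s2' := by
    unfold marg postInt
    rw [← integral_const_mul]
    congr 1
    funext θ
    rw [← integral_const_mul]
    refine setIntegral_congr_fun measurableSet_Ioi fun σ2 hσ2 => ?_
    have hσ2pos : (0:ℝ) < σ2 := hσ2
    simp only [lik]
    have hexp : Real.exp (t1 * θ / σ2 + t2 / σ2) *
        Real.exp (-(((x - θ) ^ 2 + k * s2) / (2 * σ2)))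
        = Real.exp (-(((x + t1 - θ) ^ 2 + k * s2') / (2 * σ2))) := by
      rw [← Real.exp_add]
      congr 1
      rw [hs2'def]
      field_simp
      ring
    calc Real.exp (t1 * θ / σ2 + t2 / σ2) *
          (Ck k * s2 ^ (k / 2 - 1) * σ2 ^ (-((k + 1) / 2)) *
            Real.exp (-(((x - θ) ^ 2 + k * s2) / (2 * σ2)))) * g θ σ2
        = (Real.exp (t1 * θ / σ2 + t2 / σ2) *
            Real.exp (-(((x - θ) ^ 2 + k * s2) / (2 * σ2)))) *
          (Ck k * s2 ^ (k / 2 - 1) * σ2 ^ (-((k + 1) / 2)) * g θ σ2) := by ring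
      _ = Real.exp (-(((x + t1 - θ) ^ 2 + k * s2') / (2 * σ2))) *
          (Ck k * (c * s2' ^ (k / 2 - 1)) * σ2 ^ (-((k + 1) / 2)) * g θ σ2) := by
            rw [hexp, hcs]
      _ = c * (1 * (Ck k * s2' ^ (k / 2 - 1) * σ2 ^ (-((k + 1) / 2)) *
            Real.exp (-(((x + t1 - θ) ^ 2 + k * s2') / (2 * σ2)))) * g θ σ2) := by ring
  unfold postExp
  rw [key]
end

section
/- For the MGF of V = 1/σ² evaluated at t < 0 (always valid): in the hierarchical model, for every t ≤ 0, E[exp(t/σ²) | x, s²] = (s²/(s² − 2t/k))^{k/2−1} f(x, s² − 2t/k) / f(x, s²), and in particular this quantity is at most 1 and the condition s² − 2t/k > 0 holds automatically for t ≤ 0 and s² > 0. -/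
open Real MeasureTheory

lemma Ck_nonneg {k : ℝ} (hk : 0 < k) : 0 ≤ Ck k := by
  unfold Ck
  apply div_nonneg (Real.rpow_nonneg hk.le _)
  have h := Real.Gamma_pos_of_pos (by linarith : (0:ℝ) < k / 2)
  positivity

lemma lik_nonneg {k : ℝ} (hk : 0 < k) (x : ℝ) {s2 : ℝ} (hs2 : 0 < s2) (θ : ℝ)
    {σ2 : ℝ} (hσ2 : 0 < σ2) : 0 ≤ lik k x s2 θ σ2 := by
  have h := Ck_nonneg hk
  unfold lik
  positivity

lemma key (k : ℝ) (hk : 0 < k) (x s2 t : ℝ) (hs2 : 0 < s2) (hs2' : 0 < s2 - 2 * t / k)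
    (θ σ2 : ℝ) (hσ2 : 0 < σ2) :
    Real.exp (t / σ2) * lik k x s2 θ σ2 =
      (s2 / (s2 - 2 * t / k)) ^ (k / 2 - 1) * lik k x (s2 - 2 * t / k) θ σ2 := by
  have hexp : Real.exp (t / σ2) * Real.exp (-(((x - θ) ^ 2 + k * s2) / (2 * σ2))) =
      Real.exp (-(((x - θ) ^ 2 + k * (s2 - 2 * t / k)) / (2 * σ2))) := by
    rw [← Real.exp_add]
    congr 1
    field_simp
    ring
  have hpow : (s2 : ℝ) ^ (k / 2 - 1) =
      (s2 / (s2 - 2 * t / k)) ^ (k / 2 - 1) * (s2 - 2 * t / k) ^ (k / 2 - 1) := by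
    rw [← Real.mul_rpow (by positivity) hs2'.le]
    rw [div_mul_cancel₀ _ (ne_of_gt hs2')]
  unfold lik
  rw [hpow, ← hexp]
  ring


/-- for every `t ≤ 0`, the condition `s² − 2t/k > 0` holds automatically,
the MGF identity
`E[exp(t/σ²) | x, s²] = (s²/(s² − 2t/k))^{k/2−1} f(x, s² − 2t/k)/f(x, s²)` holds,
and this quantity is at most `1`. -/
theorem posterior_mgf_V_nonpos (k : ℝ) (hk : 0 < k) (g : ℝ → ℝ → ℝ)
    (hg : ∀ θ σ2, 0 ≤ g θ σ2)
    (hgint : ∫ θ : ℝ, ∫ σ2 in Set.Ioi (0 : ℝ), g θ σ2 = 1)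
    (x s2 : ℝ) (hs2 : 0 < s2) (hf : 0 < marg k g x s2)
    (hint : ∀ t : ℝ, Integrable
      (fun p : ℝ × ℝ => Real.exp (t / p.2) * lik k x s2 p.1 p.2 * g p.1 p.2)
      ((volume : Measure ℝ).prod (volume.restrict (Set.Ioi 0)))) :
    ∀ t : ℝ, t ≤ 0 →
      0 < s2 - 2 * t / k ∧
      postExp k g x s2 (fun _ σ2 => Real.exp (t / σ2)) =
        (s2 / (s2 - 2 * t / k)) ^ (k / 2 - 1) *
          marg k g x (s2 - 2 * t / k) / marg k g x s2 ∧
      postExp k g x s2 (fun _ σ2 => Real.exp (t / σ2)) ≤ 1 := by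
  intro t ht
  have hs2' : 0 < s2 - 2 * t / k := by
    have h1 : 2 * t / k ≤ 0 := div_nonpos_iff.mpr (Or.inr ⟨by linarith, hk.le⟩)
    linarith
  -- the identity
  have hI : postInt k g x s2 (fun _ σ2 => Real.exp (t / σ2)) =
      (s2 / (s2 - 2 * t / k)) ^ (k / 2 - 1) * marg k g x (s2 - 2 * t / k) := by
    unfold marg postInt
    rw [← MeasureTheory.integral_const_mul]
    refine integral_congr_ae (Filter.Eventually.of_forall fun θ => ?_)
    beta_reduce
    rw [← MeasureTheory.integral_const_mul]
    refine setIntegral_congr_fun measurableSet_Ioi fun σ2 hσ2 => ?_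
    have hkey := key k hk x s2 t hs2 hs2' θ σ2 hσ2
    simp only [one_mul]
    linear_combination (g θ σ2) * hkey
  -- the inequality
  have prodm := (volume : Measure ℝ).prod (volume.restrict (Set.Ioi (0:ℝ)))
  have h0 : Integrable (fun p : ℝ × ℝ => (1:ℝ) * lik k x s2 p.1 p.2 * g p.1 p.2)
      ((volume : Measure ℝ).prod (volume.restrict (Set.Ioi 0))) := by
    simpa [zero_div] using hint 0
  have e1 : postInt k g x s2 (fun _ σ2 => Real.exp (t / σ2)) =
      ∫ p : ℝ × ℝ, Real.exp (t / p.2) * lik k x s2 p.1 p.2 * g p.1 p.2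
        ∂((volume : Measure ℝ).prod (volume.restrict (Set.Ioi 0))) := by
    unfold postInt
    exact (MeasureTheory.integral_prod _ (hint t)).symm
  have e2 : marg k g x s2 =
      ∫ p : ℝ × ℝ, (1:ℝ) * lik k x s2 p.1 p.2 * g p.1 p.2
        ∂((volume : Measure ℝ).prod (volume.restrict (Set.Ioi 0))) := by
    unfold marg postInt
    exact (MeasureTheory.integral_prod _ h0).symm
  have hmem : ∀ᵐ p : ℝ × ℝ ∂((volume : Measure ℝ).prod (volume.restrict (Set.Ioi 0))),
      0 < p.2 := by
    have h1 : (volume : Measure ℝ).prod (volume.restrict (Set.Ioi 0)) =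
        ((volume : Measure ℝ).prod (volume : Measure ℝ)).restrict
          (Set.univ ×ˢ Set.Ioi 0) := by
      rw [← Measure.prod_restrict, Measure.restrict_univ]
    rw [h1]
    filter_upwards [ae_restrict_mem (MeasurableSet.univ.prod measurableSet_Ioi)] with p hp
    exact hp.2
  have hle : postInt k g x s2 (fun _ σ2 => Real.exp (t / σ2)) ≤ marg k g x s2 := by
    rw [e1, e2]
    refine integral_mono_ae (hint t) h0 ?_
    filter_upwards [hmem] with p hp
    have h1 : Real.exp (t / p.2) ≤ 1 :=
      Real.exp_le_one_iff.mpr (div_nonpos_iff.mpr (Or.inr ⟨ht, hp.le⟩))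
    have h2 : 0 ≤ lik k x s2 p.1 p.2 := lik_nonneg hk x hs2 p.1 hp
    exact mul_le_mul_of_nonneg_right
      (mul_le_mul_of_nonneg_right h1 h2) (hg p.1 p.2)
  refine ⟨hs2', ?_, ?_⟩
  · unfold postExp
    rw [hI]
  · unfold postExp
    exact (div_le_one hf).mpr hle
end
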